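/- arXiv:0907.3576 — 2 statements merged into one kernel-verified Lean document; each statement's English description precedes it below -/
import Mathlib

section
/- Let T, T_c > 0, let φ₁,…,φ_N ∈ L²(ℝ) satisfy α·I ⪯ M_φ(ω) ⪯ β·I for a.e. ω ∈ [−π/T, π/T] for some 0 < α ≤ β < ∞, and set ψ_n = P_{π/T_c} φ_n for 1 ≤ n ≤ N. If there exist constants 0 < α' ≤ β' < ∞ such that α'·I ⪯ M_ψ(ω) ⪯ β'·I for a.e. ω ∈ [−π/T, π/T], then π/T_c ≥ N·π/T (equivalently, N·T_c ≤ T). -/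
open MeasureTheory Real
open scoped ComplexOrder

/-- Fourier transform with convention `φ̂(ω) = ∫ φ(t) e^{-iωt} dt`. -/
noncomputable def FT (φ : ℝ → ℂ) (ω : ℝ) : ℂ :=
  ∫ t : ℝ, φ t * Complex.exp (-(Complex.I * ω * t))

/-- Ideal lowpass filter with cutoff `B`: inverse Fourier transform of the
truncation of `φ̂` to `[-B, B]`. -/
noncomputable def lowpass (B : ℝ) (φ : ℝ → ℂ) (t : ℝ) : ℂ :=
  (1 / (2 * π)) * ∫ ω in Set.Icc (-B) B, FT φ ω * Complex.exp (Complex.I * ω * t)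

/-- Grammian matrix `[M_φ(ω)]_{ij} = ∑_{k∈ℤ} conj(φ̂_i(ω-2πk/T))·φ̂_j(ω-2πk/T)`. -/
noncomputable def gram (T : ℝ) {N : ℕ} (φ : Fin N → ℝ → ℂ) (ω : ℝ) :
    Matrix (Fin N) (Fin N) ℂ :=
  Matrix.of fun i j =>
    ∑' k : ℤ, (starRingEnd ℂ) (FT (φ i) (ω - 2 * π * k / T)) * FT (φ j) (ω - 2 * π * k / T)

open Filter
open scoped FourierTransform Matrix ENNReal


lemma FT_eq_fourier (f : ℝ → ℂ) (ω : ℝ) : FT f ω = 𝓕 f (ω / (2*π)) := by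
  rw [Real.fourier_real_eq_integral_exp_smul, FT]
  congr 1; ext t
  rw [smul_eq_mul, mul_comm]
  congr 1
  have h : (-2*π*t*(ω/(2*π)) : ℝ) = -(t*ω) := by field_simp
  rw [h]
  push_cast
  ring_nf

lemma FT_of_not_integrable {f : ℝ → ℂ} (hf : ¬ Integrable f) (ω : ℝ) : FT f ω = 0 := by
  apply integral_undef
  intro h
  apply hf
  have h2 := h.bdd_mul (f := fun t : ℝ => Complex.exp (Complex.I * ω * t))
    ((Complex.continuous_exp.comp (by continuity)).aestronglyMeasurable)
    (c := 1) (ae_of_all _ fun t => by simp [Complex.norm_exp, Complex.mul_re, Complex.mul_im])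
  have h3 : (fun t : ℝ => Complex.exp (Complex.I*ω*t) * (f t * Complex.exp (-(Complex.I*ω*t)))) = f := by
    ext t
    rw [mul_comm (Complex.exp _), mul_assoc, ← Complex.exp_add]
    simp
  rwa [h3] at h2

lemma FT_continuous {f : ℝ → ℂ} (hf : Integrable f) : Continuous (FT f) := by
  have h : Continuous (𝓕 f) :=
    VectorFourier.fourierIntegral_continuous Real.continuous_fourierChar
      (by exact continuous_inner) hf
  have h2 : FT f = fun ω => 𝓕 f (ω/(2*π)) := funext (FT_eq_fourier f)
  rw [h2]; exact h.comp (by continuity)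

lemma tendsto_FT_cocompact {f : ℝ → ℂ} (hf : Integrable f) :
    Tendsto (FT f) (Filter.cocompact ℝ) (nhds 0) := by
  have h2 : FT f = fun ω => 𝓕 f (ω/(2*π)) := funext (FT_eq_fourier f)
  rw [h2]
  apply (Real.zero_at_infty_fourier f).comp
  rw [cocompact_eq_atBot_atTop, Filter.tendsto_sup]
  constructor
  · apply Filter.Tendsto.mono_right _ le_sup_left
    exact Filter.Tendsto.atBot_div_const (by positivity) tendsto_id
  · apply Filter.Tendsto.mono_right _ le_sup_right
    exact Filter.Tendsto.atTop_div_const (by positivity) tendsto_id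

lemma norm_exp_I_mul (a t : ℝ) : ‖Complex.exp (Complex.I * a * t)‖ = 1 := by
  simp [Complex.norm_exp, Complex.mul_re, Complex.mul_im]

lemma norm_exp_I_mul' (a : ℂ) (ha : a.re = 0) : ‖Complex.exp a‖ = 1 := by
  simp [Complex.norm_exp, ha]

lemma FT_lowpass_eq_zero {B : ℝ} (hB : 0 < B) (φ : ℝ → ℂ) {ξ : ℝ} (hξ : B < |ξ|) :
    FT (lowpass B φ) ξ = 0 := by
  by_cases hφ : Integrable φ
  swap
  · have h0 : lowpass B φ = fun _ => 0 := by
      funext t; unfold lowpass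
      rw [setIntegral_congr_fun measurableSet_Icc
        (g := fun _ : ℝ => (0:ℂ)) (fun ω _ => by rw [FT_of_not_integrable hφ]; ring)]
      simp
    rw [h0]; unfold FT; simp
  by_cases hψ : Integrable (lowpass B φ)
  swap
  · exact FT_of_not_integrable hψ ξ
  -- main case
  have hπ : (0:ℝ) < π := Real.pi_pos
  have hFTcont : Continuous (FT φ) := FT_continuous hφ
  have hξne : ∀ ω ∈ Set.Icc (-B) B, (Complex.I * ((ω:ℂ) - (ξ:ℂ))) ≠ 0 := by
    intro ω hω
    simp only [ne_eq, mul_eq_zero, Complex.I_ne_zero, false_or, sub_eq_zero]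
    intro h
    have hωξ : ω = ξ := by exact_mod_cast h
    rcases abs_cases ξ with ⟨h1, _⟩ | ⟨h1, _⟩
    · have := hω.2; rw [hωξ] at this; linarith [hξ, h1.symm ▸ hξ]
    · have := hω.1; rw [hωξ] at this; linarith [h1.symm ▸ hξ]
  set h : ℝ → ℂ := Set.indicator (Set.Icc (-B) B)
    (fun ω => FT φ ω / (Complex.I * ((ω:ℂ) - (ξ:ℂ)))) with hh_def
  have hcont_den : ContinuousOn (fun ω : ℝ => Complex.I * ((ω:ℂ) - (ξ:ℂ))) (Set.Icc (-B) B) := by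
    fun_prop
  have hIcc : IntegrableOn (fun ω => FT φ ω / (Complex.I * ((ω:ℂ) - (ξ:ℂ)))) (Set.Icc (-B) B) :=
    ((hFTcont.continuousOn).div hcont_den hξne).integrableOn_compact isCompact_Icc
  have hh : Integrable h :=
    (integrable_indicator_iff measurableSet_Icc).2 hIcc
  -- G and its limit
  set G : ℝ → ℂ := fun ρ => ∫ ω in Set.Icc (-B) B,
      (FT φ ω / (Complex.I * ((ω:ℂ) - (ξ:ℂ)))) * Complex.exp (Complex.I * ((ω:ℂ) - (ξ:ℂ)) * ρ)
    with hG_def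
  have hG_eq : ∀ ρ : ℝ, G ρ = FT h (-ρ) * Complex.exp (-(Complex.I * ξ * ρ)) := by
    intro ρ
    rw [hG_def]
    simp only
    rw [FT, ← integral_indicator measurableSet_Icc, ← integral_mul_const]
    congr 1
    funext ω
    by_cases hω : ω ∈ Set.Icc (-B) B
    · rw [hh_def]
      simp only [Set.indicator_of_mem hω]
      have he : Complex.exp (-(Complex.I * ((-ρ:ℝ):ℂ) * ω)) * Complex.exp (-(Complex.I * ξ * ρ))
          = Complex.exp (Complex.I * (((ω:ℂ) - ξ) * ρ)) := by
        rw [← Complex.exp_add]; congr 1; push_cast; ring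
      rw [mul_assoc (FT φ ω / (Complex.I * ((ω:ℂ) - (ξ:ℂ)))), he, mul_assoc Complex.I]
    · rw [hh_def]
      simp only [Set.indicator_of_notMem hω, zero_mul]
  have hGlim : Tendsto G (Filter.cocompact ℝ) (nhds 0) := by
    refine squeeze_zero_norm (a := fun ρ => ‖FT h (-ρ)‖) (fun ρ => ?_) ?_
    · rw [hG_eq ρ, norm_mul, norm_exp_I_mul' _ (by simp), mul_one]
    · rw [← norm_zero (E := ℂ)]
      apply Filter.Tendsto.norm
      apply (tendsto_FT_cocompact hh).comp
      rw [cocompact_eq_atBot_atTop, Filter.tendsto_sup]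
      constructor
      · exact tendsto_neg_atBot_atTop.mono_right le_sup_right
      · exact tendsto_neg_atTop_atBot.mono_right le_sup_left
  -- integrability of the exp-multiplied truncated kernel
  have hIntE : ∀ ρ : ℝ, IntegrableOn
      (fun ω : ℝ => FT φ ω / (Complex.I * ((ω:ℂ) - ξ)) * Complex.exp (Complex.I * ((ω:ℂ) - ξ) * ρ))
      (Set.Icc (-B) B) := by
    intro ρ
    have hbm := hIcc.bdd_mul (f := fun ω : ℝ => Complex.exp (Complex.I * ((ω:ℂ) - ξ) * ρ))
      ((Complex.continuous_exp.comp (by fun_prop)).aestronglyMeasurable)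
      (c := 1) (ae_of_all _ fun ω => le_of_eq (norm_exp_I_mul' _ (by simp [Complex.mul_re, Complex.mul_im])))
    exact hbm.congr (ae_of_all _ fun ω => mul_comm _ _)
  have hint : Integrable (fun t : ℝ => lowpass B φ t * Complex.exp (-(Complex.I * ξ * t))) := by
    have h2 := hψ.bdd_mul (f := fun t : ℝ => Complex.exp (-(Complex.I * ξ * t)))
      ((Complex.continuous_exp.comp (by fun_prop)).aestronglyMeasurable)
      (c := 1) (ae_of_all _ fun t => le_of_eq (norm_exp_I_mul' _ (by simp [Complex.mul_re, Complex.mul_im])))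
    exact h2.congr (ae_of_all _ fun t => mul_comm _ _)
  have h1 : Tendsto (fun R : ℝ => ∫ t in (-R)..R, lowpass B φ t * Complex.exp (-(Complex.I * ξ * t)))
      Filter.atTop (nhds (FT (lowpass B φ) ξ)) := by
    rw [FT]
    exact intervalIntegral_tendsto_integral hint tendsto_neg_atTop_atBot tendsto_id
  have hpt : ∀ t : ℝ, lowpass B φ t * Complex.exp (-(Complex.I * ξ * t))
      = (1/(2*(π:ℂ))) * ∫ ω in Set.Icc (-B) B, FT φ ω * Complex.exp (Complex.I * ((ω:ℂ) - ξ) * t) := by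
    intro t
    unfold lowpass
    rw [mul_assoc, ← integral_mul_const]
    congr 1
    apply setIntegral_congr_fun measurableSet_Icc
    intro ω _
    simp only
    rw [mul_assoc (FT φ ω), ← Complex.exp_add]
    congr 2
    push_cast
    ring
  have key : ∀ R : ℝ, 0 ≤ R →
      (∫ t in (-R)..R, lowpass B φ t * Complex.exp (-(Complex.I * ξ * t)))
      = (1/(2*(π:ℂ))) * (G R - G (-R)) := by
    intro R hR
    have hprod : Integrable
        (Function.uncurry fun (t ω : ℝ) => FT φ ω * Complex.exp (Complex.I * ((ω:ℂ) - ξ) * t))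
        ((volume.restrict (Set.Ioc (-R) R)).prod (volume.restrict (Set.Icc (-B) B))) := by
      have hg1 : Integrable (fun p : ℝ × ℝ => (1:ℂ) * FT φ p.2)
          ((volume.restrict (Set.Ioc (-R) R)).prod (volume.restrict (Set.Icc (-B) B))) :=
        Integrable.mul_prod (integrableOn_const (C := (1:ℂ)) (μ := volume) measure_Ioc_lt_top.ne :
            Integrable (fun _ : ℝ => (1:ℂ)) (volume.restrict (Set.Ioc (-R) R)))
          (hFTcont.continuousOn.integrableOn_compact isCompact_Icc)
      have hbm := hg1.bdd_mul
        (f := fun p : ℝ × ℝ => Complex.exp (Complex.I * ((p.2:ℂ) - ξ) * p.1))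
        ((Complex.continuous_exp.comp (by fun_prop)).aestronglyMeasurable)
        (c := 1) (ae_of_all _ fun p => le_of_eq (norm_exp_I_mul' _ (by simp [Complex.mul_re, Complex.mul_im])))
      exact hbm.congr (ae_of_all _ fun p => by simp [Function.uncurry]; ring)
    calc (∫ t in (-R)..R, lowpass B φ t * Complex.exp (-(Complex.I * ξ * t)))
        = ∫ t in (-R)..R, (1/(2*(π:ℂ))) *
            ∫ ω in Set.Icc (-B) B, FT φ ω * Complex.exp (Complex.I * ((ω:ℂ) - ξ) * t) :=
          intervalIntegral.integral_congr (fun t _ => hpt t)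
      _ = (1/(2*(π:ℂ))) * ∫ t in (-R)..R,
            ∫ ω in Set.Icc (-B) B, FT φ ω * Complex.exp (Complex.I * ((ω:ℂ) - ξ) * t) :=
          intervalIntegral.integral_const_mul _ _
      _ = (1/(2*(π:ℂ))) * ∫ t in Set.Ioc (-R) R,
            ∫ ω in Set.Icc (-B) B, FT φ ω * Complex.exp (Complex.I * ((ω:ℂ) - ξ) * t) := by
          rw [intervalIntegral.integral_of_le (by linarith : -R ≤ R)]
      _ = (1/(2*(π:ℂ))) * ∫ ω in Set.Icc (-B) B,
            ∫ t in Set.Ioc (-R) R, FT φ ω * Complex.exp (Complex.I * ((ω:ℂ) - ξ) * t) := by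
          rw [integral_integral_swap hprod]
      _ = (1/(2*(π:ℂ))) * ∫ ω in Set.Icc (-B) B,
            FT φ ω * ∫ t in Set.Ioc (-R) R, Complex.exp (Complex.I * ((ω:ℂ) - ξ) * t) := by
          congr 1
          exact setIntegral_congr_fun measurableSet_Icc (fun ω _ => integral_const_mul _ _)
      _ = (1/(2*(π:ℂ))) * ∫ ω in Set.Icc (-B) B,
            FT φ ω * ((Complex.exp (Complex.I * ((ω:ℂ) - ξ) * (R:ℝ))
              - Complex.exp (Complex.I * ((ω:ℂ) - ξ) * ((-R : ℝ):ℂ))) / (Complex.I * ((ω:ℂ) - ξ))) := by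
          congr 1
          apply setIntegral_congr_fun measurableSet_Icc
          intro ω hω
          simp only
          rw [← intervalIntegral.integral_of_le (by linarith : -R ≤ R),
            integral_exp_mul_complex (hξne ω hω)]
      _ = (1/(2*(π:ℂ))) * (G R - G (-R)) := by
          congr 1
          rw [hG_def]
          simp only
          rw [← integral_sub (hIntE R) (hIntE (-R))]
          apply setIntegral_congr_fun measurableSet_Icc
          intro ω hω
          have hd := hξne ω hω
          simp only
          push_cast
          field_simp
  have h2 : Tendsto (fun R : ℝ => ∫ t in (-R)..R, lowpass B φ t * Complex.exp (-(Complex.I * ξ * t)))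
      Filter.atTop (nhds 0) := by
    have t1 : Tendsto G Filter.atTop (nhds 0) :=
      hGlim.mono_left (by rw [cocompact_eq_atBot_atTop]; exact le_sup_right)
    have t2 : Tendsto (fun R : ℝ => G (-R)) Filter.atTop (nhds 0) :=
      (hGlim.mono_left (by rw [cocompact_eq_atBot_atTop]; exact le_sup_left)).comp
        tendsto_neg_atTop_atBot
    have hGc : Tendsto (fun R : ℝ => (1/(2*(π:ℂ))) * (G R - G (-R))) Filter.atTop (nhds 0) := by
      simpa using ((t1.sub t2).const_mul (1/(2*(π:ℂ))))
    apply hGc.congr'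
    filter_upwards [Filter.eventually_ge_atTop (0:ℝ)] with R hR
    exact (key R hR).symm
  exact tendsto_nhds_unique h1 h2

lemma rank_aux {N : ℕ} (α' : ℝ) (hα' : 0 < α') (v : ℤ → Fin N → ℂ)
    (M : Matrix (Fin N) (Fin N) ℂ)
    (hM : ∀ i j, M i j = ∑' k : ℤ, (starRingEnd ℂ) (v k i) * v k j)
    (hPSD : (M - (α' : ℂ) • 1).PosSemidef)
    (K : Set ℤ) (hv0 : ∀ k ∉ K, v k = 0)
    (hfin : K.Finite) : N ≤ hfin.toFinset.card := by
  by_contra hlt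
  push_neg at hlt
  set s := hfin.toFinset with hs_def
  set A : Matrix {x // x ∈ s} (Fin N) ℂ := Matrix.of (fun k i => v k i) with hA_def
  have hni : ¬ Function.Injective A.mulVecLin := by
    intro hinj
    have h1 := LinearMap.finrank_le_finrank_of_injective hinj
    rw [Module.finrank_pi, Module.finrank_pi] at h1
    simp only [Fintype.card_fin, Fintype.card_coe] at h1
    omega
  obtain ⟨a, b, hab, hne⟩ := Function.not_injective_iff.mp hni
  set x := a - b with hx_def
  have hx0 : x ≠ 0 := sub_ne_zero.mpr hne
  have hLx : A.mulVec x = 0 := by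
    have h2 : A.mulVecLin x = 0 := by
      rw [hx_def, map_sub, hab, sub_self]
    simpa [Matrix.mulVecLin] using h2
  have hgm : M = Aᴴ * A := by
    ext i j
    rw [hM, Matrix.mul_apply]
    rw [tsum_eq_sum (s := s) (f := fun k : ℤ => (starRingEnd ℂ) (v k i) * v k j)
      (fun k hk => by
        have : v k = 0 := hv0 k (by simpa [hs_def, Set.Finite.mem_toFinset] using hk)
        simp [this])]
    rw [← Finset.sum_coe_sort s (fun k => (starRingEnd ℂ) (v k i) * v k j)]
    rfl
  have hq := hPSD.dotProduct_mulVec_nonneg x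
  rw [Matrix.sub_mulVec, dotProduct_sub] at hq
  have hq1 : star x ⬝ᵥ M.mulVec x = 0 := by
    rw [hgm, ← Matrix.mulVec_mulVec, hLx, Matrix.mulVec_zero, dotProduct_zero]
  set S : ℝ := ∑ i, Complex.normSq (x i) with hS_def
  have hq2 : star x ⬝ᵥ (((α':ℂ) • 1 : Matrix (Fin N) (Fin N) ℂ).mulVec x) = (α':ℂ) * S := by
    rw [Matrix.smul_mulVec, Matrix.one_mulVec, dotProduct_smul, smul_eq_mul]
    congr 1
    rw [hS_def]
    push_cast
    apply Finset.sum_congr rfl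
    intro i _
    rw [Pi.star_apply, mul_comm]
    exact (Complex.mul_conj (x i))
  rw [hq1, hq2] at hq
  have hS_pos : 0 < S := by
    obtain ⟨i, hi⟩ := Function.ne_iff.mp hx0
    have h3 : 0 < Complex.normSq (x i) := Complex.normSq_pos.mpr hi
    have h4 : ∀ j ∈ Finset.univ, 0 ≤ Complex.normSq (x j) := fun j _ => Complex.normSq_nonneg _
    exact lt_of_lt_of_le h3 (Finset.single_le_sum h4 (Finset.mem_univ i))
  have hq3 : (0:ℂ) ≤ ((-(α' * S) : ℝ) : ℂ) := by
    convert hq using 1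
    push_cast
    ring
  rw [Complex.zero_le_real] at hq3
  nlinarith


/-- If the generators `φ` form a Riesz basis (Grammian bounds a.e. on `[-π/T,π/T]`)
and the lowpass filtered generators `ψ_n = P_{π/T_c} φ_n` also satisfy Riesz bounds
a.e. on `[-π/T, π/T]`, then necessarily `π/T_c ≥ N·π/T`, i.e. `N·T_c ≤ T`. -/
theorem statement1 (T Tc : ℝ) (hT : 0 < T) (hTc : 0 < Tc) (N : ℕ) (hN : 0 < N)
    (φ : Fin N → ℝ → ℂ) (hφ : ∀ n, MemLp (φ n) 2 (volume : Measure ℝ))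
    (α β : ℝ) (hα : 0 < α) (hαβ : α ≤ β)
    (hGramφ : ∀ᵐ ω : ℝ, ω ∈ Set.Icc (-(π / T)) (π / T) →
      (gram T φ ω - (α : ℂ) • 1).PosSemidef ∧
      ((β : ℂ) • 1 - gram T φ ω).PosSemidef)
    (α' β' : ℝ) (hα' : 0 < α') (hαβ' : α' ≤ β')
    (hGramψ : ∀ᵐ ω : ℝ, ω ∈ Set.Icc (-(π / T)) (π / T) →
      (gram T (fun n => lowpass (π / Tc) (φ n)) ω - (α' : ℂ) • 1).PosSemidef ∧
      ((β' : ℂ) • 1 - gram T (fun n => lowpass (π / Tc) (φ n)) ω).PosSemidef) :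
    (N : ℝ) * Tc ≤ T := by
  classical
  have hπ : (0:ℝ) < π := Real.pi_pos
  set B := π / Tc with hB_def
  have hB : 0 < B := by positivity
  set ψ : Fin N → ℝ → ℂ := fun n => lowpass B (φ n) with hψ_def
  set I : Set ℝ := Set.Icc (-(π / T)) (π / T) with hI_def
  have hImeas : MeasurableSet I := hI_def ▸ measurableSet_Icc
  set c : ℤ → ℝ := fun k => 2 * π * (k:ℝ) / T with hc_def
  set A : ℤ → Set ℝ := fun k => I ∩ Set.Icc (c k - B) (c k + B) with hA_def
  have hmeasA : ∀ k : ℤ, MeasurableSet (A k) := fun k => hImeas.inter measurableSet_Icc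
  -- a.e. counting bound
  have hcount : ∀ᵐ ω : ℝ, ω ∈ I →
      (N : ℝ≥0∞) ≤ ∑' k : ℤ, (A k).indicator (fun _ => (1:ℝ≥0∞)) ω := by
    filter_upwards [hGramψ] with ω hω hmem
    have hPSD := (hω hmem).1
    set K : Set ℤ := {k : ℤ | |ω - c k| ≤ B} with hK_def
    have hv0 : ∀ k ∉ K, (fun i : Fin N => FT (ψ i) (ω - 2 * π * (k:ℝ) / T)) = 0 := by
      intro k hk
      funext i
      have habs : B < |ω - c k| := lt_of_not_ge (by simpa [hK_def] using hk)
      have h5 := FT_lowpass_eq_zero hB (φ i) (ξ := ω - c k) habs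
      simpa [hψ_def, hc_def] using h5
    have hsub : ∃ t : Finset ℤ, (↑t : Set ℤ) ⊆ K ∧ t.card = N := by
      by_cases hfin : K.Finite
      · have hcard : N ≤ hfin.toFinset.card := by
          apply rank_aux α' hα' (fun k i => FT (ψ i) (ω - 2 * π * (k:ℝ) / T))
            (gram T ψ ω) (fun i j => rfl) hPSD K hv0 hfin
        obtain ⟨t, hts, htc⟩ := Finset.exists_subset_card_eq hcard
        exact ⟨t, fun k hk => (hfin.mem_toFinset).mp (hts hk), htc⟩
      · have hinf : K.Infinite := hfin
        obtain ⟨t, hts, htf, htc⟩ := hinf.exists_subset_ncard_eq N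
        refine ⟨htf.toFinset, ?_, ?_⟩
        · intro k hk
          exact hts (by simpa [Set.Finite.mem_toFinset] using hk)
        · rw [← Set.ncard_eq_toFinset_card t htf, htc]
    obtain ⟨t, hts, htc⟩ := hsub
    calc (N:ℝ≥0∞) = ∑ _k ∈ t, (1:ℝ≥0∞) := by simp [htc]
      _ = ∑ k ∈ t, (A k).indicator (fun _ => (1:ℝ≥0∞)) ω := by
          apply Finset.sum_congr rfl
          intro k hk
          have hkK : k ∈ K := hts hk
          have habs : |ω - c k| ≤ B := by simpa [hK_def] using hkK
          have hmemA : ω ∈ A k := by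
            refine ⟨hmem, ?_⟩
            rw [Set.mem_Icc]
            rw [abs_le] at habs
            constructor <;> linarith [habs.1, habs.2]
          rw [Set.indicator_of_mem hmemA]
      _ ≤ ∑' k : ℤ, (A k).indicator (fun _ => (1:ℝ≥0∞)) ω := ENNReal.sum_le_tsum t
  -- the translated sets
  set D : ℤ → Set ℝ := fun k =>
    Set.Icc (-(π / T) - c k) (π / T - c k) ∩ Set.Icc (-B) B with hD_def
  have hmeasD : ∀ k : ℤ, MeasurableSet (D k) := fun k =>
    measurableSet_Icc.inter measurableSet_Icc
  have hvolAD : ∀ k : ℤ, volume (A k) = volume (D k) := by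
    intro k
    have hpre : D k = (fun ω : ℝ => ω + c k) ⁻¹' (A k) := by
      ext ω
      simp only [hD_def, hA_def, hI_def, Set.mem_inter_iff, Set.mem_Icc, Set.mem_preimage]
      constructor
      · rintro ⟨⟨h1, h2⟩, h3, h4⟩
        exact ⟨⟨by linarith, by linarith⟩, by linarith, by linarith⟩
      · rintro ⟨⟨h1, h2⟩, h3, h4⟩
        exact ⟨⟨by linarith, by linarith⟩, by linarith, by linarith⟩
    rw [hpre, measure_preimage_add_right]
  have hdisj : Pairwise (Function.onFun (AEDisjoint volume) D) := by
    have key2 : ∀ k l : ℤ, k < l → volume (D k ∩ D l) = 0 := by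
      intro k l hkl
      have hsub2 : D k ∩ D l ⊆ Set.Icc (-(π / T) - c k) (π / T - c l) := by
        rintro x ⟨⟨⟨ha, _⟩, _⟩, ⟨⟨_, hb⟩, _⟩⟩
        exact ⟨ha, hb⟩
      apply measure_mono_null hsub2
      rw [Real.volume_Icc]
      apply ENNReal.ofReal_eq_zero.mpr
      have hkl1 : (1:ℝ) ≤ (l:ℝ) - (k:ℝ) := by
        have h6 : ((k:ℝ)) + 1 ≤ (l:ℝ) := by exact_mod_cast Int.add_one_le_iff.mpr hkl
        linarith
      have hdiff : c l - c k = 2 * π * ((l:ℝ) - (k:ℝ)) / T := by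
        rw [hc_def]; ring
      have h2T : (0:ℝ) < 2 * π / T := by positivity
      have hge : c l - c k ≥ 2 * π / T := by
        rw [hdiff, ge_iff_le, div_le_div_iff_of_pos_right hT]
        nlinarith [mul_le_mul_of_nonneg_left hkl1 (by positivity : (0:ℝ) ≤ 2*π)]
      have h8 : 2 * π / T = π / T + π / T := by ring
      linarith [hge]
    intro k l hkl
    rcases lt_or_gt_of_ne hkl with h | h
    · exact key2 k l h
    · have := key2 l k h
      rwa [Function.onFun, AEDisjoint, Set.inter_comm]
  -- measure computation
  have hmain : (N:ℝ≥0∞) * volume I ≤ volume (Set.Icc (-B) B) := by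
    calc (N:ℝ≥0∞) * volume I
        = ∫⁻ ω, I.indicator (fun _ => (N:ℝ≥0∞)) ω := by
          rw [lintegral_indicator_const hImeas]
      _ ≤ ∫⁻ ω, ∑' k : ℤ, (A k).indicator (fun _ => (1:ℝ≥0∞)) ω := by
          apply lintegral_mono_ae
          filter_upwards [hcount] with ω hω
          by_cases hmem : ω ∈ I
          · rw [Set.indicator_of_mem hmem]; exact hω hmem
          · rw [Set.indicator_of_notMem hmem]; exact zero_le
      _ = ∑' k : ℤ, volume (A k) := by
          rw [lintegral_tsum (fun k => (measurable_const.indicator (hmeasA k)).aemeasurable)]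
          congr 1
          funext k
          rw [lintegral_indicator_const (hmeasA k), one_mul]
      _ = ∑' k : ℤ, volume (D k) := by
          congr 1; funext k; exact hvolAD k
      _ = volume (⋃ k : ℤ, D k) :=
          (measure_iUnion₀ hdisj (fun k => (hmeasD k).nullMeasurableSet)).symm
      _ ≤ volume (Set.Icc (-B) B) :=
          measure_mono (Set.iUnion_subset fun k => Set.inter_subset_right)
  -- conclude
  have hIvol : volume I = ENNReal.ofReal (π / T + π / T) := by
    rw [hI_def, Real.volume_Icc, sub_neg_eq_add]
  have hJvol : volume (Set.Icc (-B) B) = ENNReal.ofReal (B + B) := by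
    rw [Real.volume_Icc, sub_neg_eq_add]
  rw [hIvol, hJvol, ← ENNReal.ofReal_natCast N, ← ENNReal.ofReal_mul (by positivity)] at hmain
  have hre : (N:ℝ) * (π / T + π / T) ≤ B + B :=
    (ENNReal.ofReal_le_ofReal_iff (by positivity)).mp hmain
  rw [hB_def] at hre
  have e1 : (N:ℝ) * (π / T + π / T) = (2 * (N:ℝ) * π) / T := by field_simp; ring
  have e2 : π / Tc + π / Tc = (2 * π) / Tc := by ring
  rw [e1, e2, div_le_div_iff₀ hT hTc] at hre
  nlinarith
end

section
/- Let T > 0 and D > 0 with 1 < D/T < 3/2. Define γ̂ : ℝ → ℂ by γ̂(ω) = sinc(ωD) + i·(sinc(ωD − 2πD/T) − sinc(ωD + 2πD/T)). Then γ̂(ω) ≠ 0 for every ω ∈ [−π/T, π/T]. -/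
open Real

/-- `sinc u = sin u / u` for `u ≠ 0`, with `sinc 0 = 1`. -/
noncomputable def sinc (u : ℝ) : ℝ := if u = 0 then 1 else Real.sin u / u

/-- For `1 < D/T < 3/2`, the Fourier transform of the mixed generator obtained by
modulating the box generator with `p(t) = 1 + 2 sin(2πt/T)`,
`γ̂(ω) = sinc(ωD) + i(sinc(ωD - 2πD/T) - sinc(ωD + 2πD/T))`,
never vanishes on `[-π/T, π/T]`. -/
theorem statement11 (T D : ℝ) (hT : 0 < T) (hD : 0 < D)
    (h1 : 1 < D / T) (h2 : D / T < 3 / 2) :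
    ∀ ω ∈ Set.Icc (-(π / T)) (π / T),
      ((_root_.sinc (ω * D) : ℂ) +
        Complex.I * ((_root_.sinc (ω * D - 2 * π * D / T) - _root_.sinc (ω * D + 2 * π * D / T) : ℝ) : ℂ))
        ≠ 0 := by
  intro ω hω h
  have hπ := Real.pi_pos
  set a : ℝ := 2 * π * D / T with ha
  have harw : a = 2 * π * (D / T) := by rw [ha]; ring
  have ha2 : 2 * π < a := by rw [harw]; nlinarith
  have ha3 : a < 3 * π := by rw [harw]; nlinarith
  have hsina : 0 < Real.sin a := by
    have e : Real.sin a = Real.sin (a - 2 * π) := (Real.sin_sub_two_pi a).symm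
    rw [e]
    apply Real.sin_pos_of_pos_of_lt_pi <;> linarith
  have hre : _root_.sinc (ω * D) = 0 := by
    have := congrArg Complex.re h
    simpa using this
  have him : _root_.sinc (ω * D - a) - _root_.sinc (ω * D + a) = 0 := by
    have := congrArg Complex.im h
    simpa using this
  have hx0 : ω * D ≠ 0 := by
    intro h0; rw [h0] at hre; simp [_root_.sinc] at hre
  have hsin0 : Real.sin (ω * D) = 0 := by
    rw [_root_.sinc, if_neg hx0, div_eq_zero_iff] at hre
    tauto
  have hbound : |ω * D| < 3 * π / 2 := by
    have hab : |ω| ≤ π / T := abs_le.2 ⟨hω.1, hω.2⟩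
    have e1 : |ω * D| = |ω| * D := by rw [abs_mul, abs_of_pos hD]
    have e2 : π / T * D = π * (D / T) := by field_simp
    nlinarith [abs_nonneg ω]
  obtain ⟨n, hn⟩ := Real.sin_eq_zero_iff.1 hsin0
  have hn0 : n ≠ 0 := by
    rintro rfl; apply hx0; rw [← hn]; norm_num
  have hnabs : |(n : ℝ)| < 2 := by
    have e : |(n : ℝ)| * π = |ω * D| := by rw [← hn, abs_mul, abs_of_pos hπ]
    nlinarith [e ▸ hbound]
  have hn2 : |n| < 2 := by exact_mod_cast (by exact hnabs : (|n| : ℝ) < 2)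
  have hcase : n = 1 ∨ n = -1 := by
    have := abs_lt.mp hn2; omega
  have hpa : π + a ≠ 0 := by positivity
  have hma : π - a ≠ 0 := by intro h0; linarith
  rcases hcase with rfl | rfl
  · have hx : ω * D = π := by rw [← hn]; push_cast; ring
    rw [hx] at him
    have e1 : π - a ≠ 0 := hma
    have e2 : π + a ≠ 0 := hpa
    rw [_root_.sinc, if_neg e1, _root_.sinc, if_neg e2, Real.sin_pi_sub,
      show π + a = a + π from add_comm _ _, Real.sin_add_pi] at him
    have h5 : Real.sin a / (π - a) + Real.sin a / (a + π) = 0 := by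
      have : -Real.sin a / (a + π) = -(Real.sin a / (a + π)) := by ring
      linarith [him, this ▸ him]
    rw [div_add_div _ _ e1 (by intro h0; linarith : a + π ≠ 0)] at h5
    have h6 : Real.sin a * (a + π) + (π - a) * Real.sin a = 0 := by
      have := div_eq_zero_iff.1 h5
      rcases this with h7 | h7
      · exact h7
      · exfalso; nlinarith
    nlinarith
  · have hx : ω * D = -π := by rw [← hn]; push_cast; ring
    rw [hx] at him
    have e1 : -π - a ≠ 0 := by intro h0; linarith
    have e2 : -π + a ≠ 0 := by intro h0; linarith
    have s1 : Real.sin (-π - a) = Real.sin a := by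
      rw [show -π - a = -(a + π) by ring, Real.sin_neg, Real.sin_add_pi]; ring
    have s2 : Real.sin (-π + a) = -Real.sin a := by
      rw [show -π + a = a - π by ring, Real.sin_sub_pi]
    rw [_root_.sinc, if_neg e1, _root_.sinc, if_neg e2, s1, s2] at him
    have h5 : Real.sin a / (-π - a) + Real.sin a / (-π + a) = 0 := by
      have : -Real.sin a / (-π + a) = -(Real.sin a / (-π + a)) := by ring
      linarith [this ▸ him]
    rw [div_add_div _ _ e1 e2] at h5
    have h6 : Real.sin a * (-π + a) + (-π - a) * Real.sin a = 0 := by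
      rcases div_eq_zero_iff.1 h5 with h7 | h7
      · exact h7
      · exfalso; nlinarith
    nlinarith
end
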